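/- arXiv:2102.08042 — 2 statements merged into one kernel-verified Lean document; each statement's English description precedes it below -/
import Mathlib

section
/- Let $T \in (0, \infty]$, $\tau \in (0, T)$, $a > 0$ and $b > 0$. Suppose $y \colon [0, T) \to [0, \infty)$ is continuous on $[0,T)$, differentiable on $(0, T)$, and satisfies $y'(t) + a\,y(t) \le h(t)$ for all $t \in (0, T)$, where $h \colon [0,T) \to [0,\infty)$ is locally integrable and satisfies $\int_t^{t+\tau} h(s)\,ds \le b$ for all $t \in [0, T - \tau)$. Then $y(t) \le \max\{\, y(0) + b,\; b/(a\tau) + 2b \,\}$ for all $t \in [0, T)$. -/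
open MeasureTheory Set ENNReal

/-- Uniform-in-time ODE comparison lemma (Lemma 2.2 of the paper).
`T ∈ (0,∞]` is modeled as `T : ℝ≥0∞` with `0 < T`; a real time `t ≥ 0` belongs to
`[0,T)` iff `ENNReal.ofReal t < T` (which also covers the case `T = ∞`). -/
theorem ode_uniform_bound
    (T : ℝ≥0∞) (hT : 0 < T)
    (τ a b : ℝ) (hτ : 0 < τ) (hτT : ENNReal.ofReal τ < T)
    (ha : 0 < a) (hb : 0 < b)
    (y y' h : ℝ → ℝ)
    -- y maps [0,T) into [0,∞)
    (hy_nonneg : ∀ t : ℝ, 0 ≤ t → ENNReal.ofReal t < T → 0 ≤ y t)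
    -- y is continuous on [0,T)
    (hy_cont : ContinuousOn y {t : ℝ | 0 ≤ t ∧ ENNReal.ofReal t < T})
    -- y is differentiable on (0,T) with derivative y'
    (hy_deriv : ∀ t : ℝ, 0 < t → ENNReal.ofReal t < T → HasDerivAt y (y' t) t)
    -- the differential inequality y'(t) + a y(t) ≤ h(t) on (0,T)
    (hineq : ∀ t : ℝ, 0 < t → ENNReal.ofReal t < T → y' t + a * y t ≤ h t)
    -- h is nonnegative on [0,T)
    (hh_nonneg : ∀ t : ℝ, 0 ≤ t → ENNReal.ofReal t < T → 0 ≤ h t)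
    -- h is locally integrable on [0,T): integrable on every compact subinterval
    (hh_loc : ∀ s t : ℝ, 0 ≤ s → s ≤ t → ENNReal.ofReal t < T →
      IntervalIntegrable h volume s t)
    -- ∫_t^{t+τ} h ≤ b for all t ∈ [0, T-τ)
    (hh_int : ∀ t : ℝ, 0 ≤ t → ENNReal.ofReal (t + τ) < T →
      (∫ s in t..(t + τ), h s) ≤ b) :
    ∀ t : ℝ, 0 ≤ t → ENNReal.ofReal t < T →
      y t ≤ max (y 0 + b) (b / (a * τ) + 2 * b) := by
  intro t0 ht0 ht0T
  set M := max (y 0 + b) (b / (a * τ) + 2 * b) with hM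
  by_contra hcon
  push_neg at hcon
  -- key comparison: y v - y u ≤ ∫ φ whenever y' ≤ φ on (u,v)
  have key : ∀ u v : ℝ, 0 ≤ u → u ≤ v → ENNReal.ofReal v < T →
      ∀ φ : ℝ → ℝ, IntervalIntegrable φ volume u v → (∀ x ∈ Ioo u v, y' x ≤ φ x) →
      y v - y u ≤ ∫ r in u..v, φ r := by
    intro u v hu huv hvT φ hφ hφg
    apply intervalIntegral.sub_le_integral_of_hasDeriv_right_of_le huv
    · exact hy_cont.mono fun r hr =>
        ⟨hu.trans hr.1, lt_of_le_of_lt (ENNReal.ofReal_le_ofReal hr.2) hvT⟩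
    · intro x hx
      exact (hy_deriv x (hu.trans_lt hx.1)
        (lt_of_le_of_lt (ENNReal.ofReal_le_ofReal hx.2.le) hvT)).hasDerivWithinAt
    · exact (integrableOn_Icc_iff_integrableOn_Ioc (by simp)).2 hφ.1
    · exact hφg
  -- y' ≤ h on (0,T)
  have hy'h : ∀ x : ℝ, 0 < x → ENNReal.ofReal x < T → y' x ≤ h x := by
    intro x hx hxT
    have := hineq x hx hxT
    have hy0 := hy_nonneg x hx.le hxT
    nlinarith
  have hMb1 : y 0 ≤ M - b := by
    have := le_max_left (y 0 + b) (b / (a * τ) + 2 * b); linarith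
  have hMb2 : b / (a * τ) + b ≤ M - b := by
    have := le_max_right (y 0 + b) (b / (a * τ) + 2 * b); linarith
  -- the set A
  set A : Set ℝ := Icc 0 t0 ∩ y ⁻¹' Iic (M - b) with hA
  have hAclosed : IsClosed A := by
    apply ContinuousOn.preimage_isClosed_of_isClosed _ isClosed_Icc isClosed_Iic
    exact hy_cont.mono fun r hr =>
      ⟨hr.1, lt_of_le_of_lt (ENNReal.ofReal_le_ofReal hr.2) ht0T⟩
  have hAne : A.Nonempty := ⟨0, ⟨le_rfl, ht0⟩, hMb1⟩
  have hAbdd : BddAbove A := ⟨t0, fun r hr => hr.1.2⟩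
  set s := sSup A with hs
  have hsA : s ∈ A := hAclosed.csSup_mem hAne hAbdd
  have hs0 : 0 ≤ s := hsA.1.1
  have hst0 : s ≤ t0 := hsA.1.2
  have hys : y s ≤ M - b := hsA.2
  have hsT : ENNReal.ofReal s < T := lt_of_le_of_lt (ENNReal.ofReal_le_ofReal hst0) ht0T
  have hbpos : 0 < b := hb
  have hyt0 : M < y t0 := hcon
  have hslt : s < t0 := by
    rcases lt_or_eq_of_le hst0 with h' | h'
    · exact h'
    · exfalso; rw [h'] at hys; linarith
  have hgt : ∀ r : ℝ, s < r → r ≤ t0 → M - b < y r := by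
    intro r hr1 hr2
    by_contra hle
    push_neg at hle
    have : r ∈ A := ⟨⟨hs0.trans hr1.le, hr2⟩, hle⟩
    exact absurd (le_csSup hAbdd this) (not_le.2 hr1)
  -- nonnegativity of h a.e. on Ioc intervals needed
  have hae : ∀ v : ℝ, ENNReal.ofReal v < T →
      (0 : ℝ → ℝ) ≤ᵐ[volume.restrict (Ioc 0 v)] h := by
    intro v hvT
    refine (ae_restrict_iff' measurableSet_Ioc).2 (ae_of_all _ fun r hr => ?_)
    exact hh_nonneg r hr.1.le (lt_of_le_of_lt (ENNReal.ofReal_le_ofReal hr.2) hvT)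
  rcases le_or_gt (t0 - s) τ with hcase | hcase
  · -- short gap: y t0 ≤ y s + ∫_s^t0 h ≤ (M-b) + b = M
    have hint : (∫ r in s..t0, h r) ≤ b := by
      rcases le_or_gt t0 τ with ht0τ | ht0τ
      · have h1 : (∫ r in s..t0, h r) ≤ ∫ r in (0:ℝ)..τ, h r := by
          apply intervalIntegral.integral_mono_interval hs0 hslt.le ht0τ
            (hae τ hτT) (hh_loc 0 τ le_rfl hτ.le hτT)
        have h2 := hh_int 0 le_rfl (by rwa [zero_add])
        rw [zero_add] at h2
        linarith
      · have h1 : (∫ r in s..t0, h r) ≤ ∫ r in (t0 - τ)..t0, h r := by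
          apply intervalIntegral.integral_mono_interval (by linarith) hslt.le le_rfl
          · refine (ae_restrict_iff' measurableSet_Ioc).2 (ae_of_all _ fun r hr => ?_)
            exact hh_nonneg r (by linarith [hr.1]) (lt_of_le_of_lt
              (ENNReal.ofReal_le_ofReal hr.2) ht0T)
          · exact hh_loc (t0 - τ) t0 (by linarith) (by linarith) ht0T
        have h2 := hh_int (t0 - τ) (by linarith) (by rwa [sub_add_cancel])
        rw [sub_add_cancel] at h2
        linarith
    have h3 := key s t0 hs0 hslt.le ht0T h (hh_loc s t0 hs0 hslt.le ht0T)
      (fun x hx => hy'h x (hs0.trans_lt hx.1)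
        (lt_of_le_of_lt (ENNReal.ofReal_le_ofReal hx.2.le) ht0T))
    linarith
  · -- long gap: contradiction at u = s + τ
    set u := s + τ with hu
    have hut0 : u < t0 := by simp only [hu]; linarith
    have huT : ENNReal.ofReal u < T := lt_of_le_of_lt (ENNReal.ofReal_le_ofReal hut0.le) ht0T
    have hhint : IntervalIntegrable h volume s u := hh_loc s u hs0 (by simp [hu]; linarith) huT
    have hbd : ∀ x ∈ Ioo s u, y' x ≤ h x - a * (M - b) := by
      intro x hx
      have hx0 : 0 < x := hs0.trans_lt hx.1
      have hxT : ENNReal.ofReal x < T := lt_of_le_of_lt (ENNReal.ofReal_le_ofReal hx.2.le) huT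
      have h1 := hineq x hx0 hxT
      have h2 : M - b < y x := hgt x hx.1 (hx.2.le.trans hut0.le)
      nlinarith
    have h3 := key s u hs0 (by simp [hu]; linarith) huT (fun r => h r - a * (M - b))
      (hhint.sub intervalIntegrable_const) hbd
    rw [intervalIntegral.integral_sub hhint intervalIntegrable_const,
      intervalIntegral.integral_const] at h3
    have h4 : (∫ r in s..u, h r) ≤ b := hh_int s hs0 huT
    have h5 : M - b < y u := hgt u (by simp [hu]; linarith) hut0.le
    have hsmul : (u - s) • (a * (M - b)) = τ * (a * (M - b)) := by
      simp [hu, smul_eq_mul]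
    rw [hsmul] at h3
    have hatpos : 0 < a * τ := mul_pos ha hτ
    have hdiv : a * τ * (b / (a * τ)) = b := by field_simp
    nlinarith [hdiv]
end

section
/- Let $K \ge 1$ and $C \ge 1$ be real constants, and let $a \colon \mathbb{N} \to [0, \infty)$ be a sequence satisfying, for every $j \ge 1$, $a_j \le K^{2^j} + C\,(1 + 2^j)^{6}\,(a_{j-1})^{2}$. Then the sequence $\big( (a_j)^{2^{-j}} \big)_{j \ge 0}$ is bounded above; that is, there exists $M > 0$ such that $a_j \le M^{2^j}$ for all $j \ge 0$. -/
/-- Recursive (dyadic) form of the Moser iteration argument used in the proof of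
Lemma 3.14: if `a_j ≤ K^(2^j) + C (1 + 2^j)^6 (a_{j-1})^2` for all `j ≥ 1`,
then `(a_j)^(2⁻ʲ)` is bounded, i.e. `a_j ≤ M^(2^j)` for some `M > 0`. -/
theorem moser_iteration_bound
    (K C : ℝ) (hK : 1 ≤ K) (hC : 1 ≤ C)
    (a : ℕ → ℝ)
    (ha_nonneg : ∀ j : ℕ, 0 ≤ a j)
    (hrec : ∀ j : ℕ, 1 ≤ j →
      a j ≤ K ^ (2 ^ j) + C * (1 + (2 : ℝ) ^ j) ^ 6 * (a (j - 1)) ^ 2) :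
    ∃ M : ℝ, 0 < M ∧ ∀ j : ℕ, a j ≤ M ^ (2 ^ j) := by
  set b : ℕ → ℝ := fun j => max (a j) (K ^ (2 ^ j)) with hb
  have hb1 : ∀ j, (1 : ℝ) ≤ b j := fun j =>
    le_max_of_le_right (one_le_pow₀ hK)
  have hab : ∀ j, a j ≤ b j := fun j => le_max_left _ _
  obtain ⟨D, hD⟩ : ∃ D : ℝ, D = 128 * C := ⟨_, rfl⟩
  have hD1 : (1 : ℝ) ≤ D := by rw [hD]; nlinarith
  have hD0 : (0 : ℝ) ≤ D := by linarith
  -- key step: b (j+1) ≤ D^(j+2) * (b j)^2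
  have key : ∀ j : ℕ, b (j + 1) ≤ D ^ (j + 2) * (b j) ^ 2 := by
    intro j
    have hbj0 : (0 : ℝ) ≤ b j := le_trans zero_le_one (hb1 j)
    have hKb : K ^ (2 ^ (j + 1)) ≤ (b j) ^ 2 := by
      have : K ^ (2 ^ (j + 1)) = (K ^ (2 ^ j)) ^ 2 := by
        rw [← pow_mul, pow_succ]
      rw [this]
      exact pow_le_pow_left₀ (pow_nonneg (by linarith) _) (le_max_right _ _) 2
    have hD2 : (1 : ℝ) ≤ D ^ (j + 2) := one_le_pow₀ hD1
    have hfac : (1 : ℝ) + C * (1 + (2:ℝ) ^ (j+1)) ^ 6 ≤ D ^ (j + 2) := by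
      have h1 : (1 : ℝ) + (2:ℝ) ^ (j+1) ≤ (2:ℝ) ^ (j+2) := by
        have h : (1 : ℝ) ≤ (2:ℝ) ^ (j+1) := one_le_pow₀ (by norm_num : (1:ℝ) ≤ 2)
        calc (1 : ℝ) + (2:ℝ) ^ (j+1) ≤ (2:ℝ) ^ (j+1) + (2:ℝ) ^ (j+1) := by linarith
          _ = (2:ℝ) ^ (j+2) := by ring
      have h2 : ((1 : ℝ) + (2:ℝ) ^ (j+1)) ^ 6 ≤ ((2:ℝ) ^ (j+2)) ^ 6 := by
        apply pow_le_pow_left₀ (by positivity) h1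
      have h3 : ((2:ℝ) ^ (j+2)) ^ 6 = (2:ℝ) ^ (6 * (j+2)) := by
        rw [← pow_mul, Nat.mul_comm]
      have h4 : (2:ℝ) ^ (6 * (j+2)) * 2 ≤ (2:ℝ) ^ (7 * (j+2)) := by
        have : 6 * (j+2) + 1 ≤ 7 * (j+2) := by omega
        calc (2:ℝ) ^ (6 * (j+2)) * 2 = (2:ℝ) ^ (6 * (j+2) + 1) := by rw [pow_succ]
          _ ≤ (2:ℝ) ^ (7 * (j+2)) := pow_le_pow_right₀ one_le_two this
      have h5 : D ^ (j+2) = (2:ℝ) ^ (7 * (j+2)) * C ^ (j+2) := by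
        rw [hD]
        rw [mul_pow]
        congr 1
        rw [show (128:ℝ) = 2 ^ 7 by norm_num, ← pow_mul]
      have hC2 : C ≤ C ^ (j+2) := le_self_pow₀ (by linarith) (by omega)
      have h6 : C * ((1 : ℝ) + (2:ℝ) ^ (j+1)) ^ 6 ≤ C * (2:ℝ) ^ (6 * (j+2)) := by
        rw [← h3]
        exact mul_le_mul_of_nonneg_left h2 (by linarith)
      have hCp : (1:ℝ) ≤ C * (2:ℝ) ^ (6 * (j+2)) := by
        have : (1:ℝ) ≤ (2:ℝ) ^ (6 * (j+2)) := one_le_pow₀ (by norm_num : (1:ℝ) ≤ 2)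
        nlinarith
      calc (1 : ℝ) + C * (1 + (2:ℝ) ^ (j+1)) ^ 6
          ≤ C * (2:ℝ) ^ (6 * (j+2)) + C * (2:ℝ) ^ (6 * (j+2)) := by linarith
        _ = C * ((2:ℝ) ^ (6 * (j+2)) * 2) := by ring
        _ ≤ C * (2:ℝ) ^ (7 * (j+2)) := mul_le_mul_of_nonneg_left h4 (by linarith)
        _ ≤ C ^ (j+2) * (2:ℝ) ^ (7 * (j+2)) := by
            apply mul_le_mul_of_nonneg_right hC2 (by positivity)
        _ = D ^ (j+2) := by rw [h5]; ring
    have hbsq : (1:ℝ) ≤ (b j) ^ 2 := one_le_pow₀ (hb1 j)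
    have ha1 : a (j + 1) ≤ D ^ (j+2) * (b j) ^ 2 := by
      have h := hrec (j + 1) (by omega)
      simp only [Nat.add_sub_cancel] at h
      have hasq : (a j) ^ 2 ≤ (b j) ^ 2 :=
        pow_le_pow_left₀ (ha_nonneg j) (hab j) 2
      have hCpos : 0 ≤ C * (1 + (2:ℝ) ^ (j+1)) ^ 6 := by positivity
      calc a (j + 1) ≤ K ^ (2 ^ (j+1)) + C * (1 + (2:ℝ) ^ (j+1)) ^ 6 * (a j) ^ 2 := h
        _ ≤ (b j) ^ 2 + C * (1 + (2:ℝ) ^ (j+1)) ^ 6 * (b j) ^ 2 := by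
            have := mul_le_mul_of_nonneg_left hasq hCpos
            linarith
        _ = (1 + C * (1 + (2:ℝ) ^ (j+1)) ^ 6) * (b j) ^ 2 := by ring
        _ ≤ D ^ (j+2) * (b j) ^ 2 := by
            apply mul_le_mul_of_nonneg_right hfac (by positivity)
    have hK1 : K ^ (2 ^ (j + 1)) ≤ D ^ (j+2) * (b j) ^ 2 := by
      calc K ^ (2 ^ (j + 1)) ≤ (b j) ^ 2 := hKb
        _ = 1 * (b j) ^ 2 := (one_mul _).symm
        _ ≤ D ^ (j+2) * (b j) ^ 2 := by
            apply mul_le_mul_of_nonneg_right hD2 (by positivity)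
    exact max_le ha1 hK1
  -- exponent bookkeeping
  let e : ℕ → ℕ := fun n => Nat.rec 0 (fun j ej => (j + 2) + 2 * ej) n
  have he0 : e 0 = 0 := rfl
  have heS : ∀ j, e (j + 1) = (j + 2) + 2 * e j := fun j => rfl
  have hebound : ∀ j, e j + (j + 3) ≤ 3 * 2 ^ j := by
    intro j
    induction j with
    | zero => simp [he0]
    | succ n ih =>
      rw [heS]
      have : 3 * 2 ^ (n + 1) = 2 * (3 * 2 ^ n) := by ring
      omega
  -- main induction: b j ≤ D ^ (e j) * (b 0) ^ (2 ^ j)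
  have main : ∀ j, b j ≤ D ^ (e j) * (b 0) ^ (2 ^ j) := by
    intro j
    induction j with
    | zero => simp [he0]
    | succ n ih =>
      have hb0 : (0:ℝ) ≤ b 0 := le_trans zero_le_one (hb1 0)
      have hbn0 : (0:ℝ) ≤ b n := le_trans zero_le_one (hb1 n)
      calc b (n + 1) ≤ D ^ (n + 2) * (b n) ^ 2 := key n
        _ ≤ D ^ (n + 2) * (D ^ (e n) * (b 0) ^ (2 ^ n)) ^ 2 := by
            apply mul_le_mul_of_nonneg_left _ (by positivity)
            exact pow_le_pow_left₀ hbn0 ih 2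
        _ = D ^ (e (n + 1)) * (b 0) ^ (2 ^ (n + 1)) := by
            rw [heS]
            rw [mul_pow, ← pow_mul, ← pow_mul, ← mul_assoc, ← pow_add]
            congr 2 <;> omega
  refine ⟨D ^ 3 * b 0, by positivity, fun j => ?_⟩
  have hb0 : (1:ℝ) ≤ b 0 := hb1 0
  calc a j ≤ b j := hab j
    _ ≤ D ^ (e j) * (b 0) ^ (2 ^ j) := main j
    _ ≤ D ^ (3 * 2 ^ j) * (b 0) ^ (2 ^ j) := by
        apply mul_le_mul_of_nonneg_right _ (by positivity)
        exact pow_le_pow_right₀ hD1 (by have := hebound j; omega)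
    _ = (D ^ 3 * b 0) ^ (2 ^ j) := by
        rw [pow_mul, ← mul_pow]
end
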